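/- Let p be any prime and let O be the ring of integers of a finite extension K of ℚ_p. Then the closure of the commutator subgroup of SL_2(O) is an open subgroup of SL_2(O); equivalently, it has finite index in SL_2(O). -/

import Mathlib

open Matrix IsLocalRing

/-- `SL₂` of a topological ring carries the subspace topology from the matrix ring. -/
noncomputable instance sltop (n R : Type*) [DecidableEq n] [Fintype n] [CommRing R]
    [TopologicalSpace R] : TopologicalSpace (SpecialLinearGroup n R) :=
  TopologicalSpace.induced (fun A => (A : Matrix n n R)) inferInstance

/-- With the subspace topology, `SL_n` of a topological ring is a topological group. -/
instance slTopologicalGroup (n R : Type*) [DecidableEq n] [Fintype n] [CommRing R]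
    [TopologicalSpace R] [IsTopologicalRing R] :
    IsTopologicalGroup (SpecialLinearGroup n R) where
  continuous_mul := by
    apply continuous_induced_rng.2
    exact ((continuous_induced_dom.comp continuous_fst).matrix_mul
      (continuous_induced_dom.comp continuous_snd))
  continuous_inv := by
    apply continuous_induced_rng.2
    have : (fun A : SpecialLinearGroup n R => ((A⁻¹ : SpecialLinearGroup n R) : Matrix n n R))
        = fun A : SpecialLinearGroup n R => (A : Matrix n n R).adjugate := by
      funext A; exact Matrix.SpecialLinearGroup.coe_inv A
    show Continuous fun A : SpecialLinearGroup n R =>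
      ((A⁻¹ : SpecialLinearGroup n R) : Matrix n n R)
    rw [this]
    exact continuous_induced_dom.matrix_adjugate

namespace Stmt11Aux

open scoped commutatorElement

variable {R : Type*} [CommRing R]

/-- Elementary matrix with upper-right entry `x`. -/
def E12 (x : R) : SpecialLinearGroup (Fin 2) R :=
  ⟨!![1, x; 0, 1], by simp [Matrix.det_fin_two_of]⟩

/-- Elementary matrix with lower-left entry `x`. -/
def E21 (x : R) : SpecialLinearGroup (Fin 2) R :=
  ⟨!![1, 0; x, 1], by simp [Matrix.det_fin_two_of]⟩

/-- Diagonal matrix `diag (u, u⁻¹)` for a unit `u`. -/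
def Dm (u : Rˣ) : SpecialLinearGroup (Fin 2) R :=
  ⟨!![(u : R), 0; 0, ((u⁻¹ : Rˣ) : R)], by simp [Matrix.det_fin_two_of]⟩

theorem E12_mul (x y : R) : E12 x * E12 y = E12 (x + y) := by
  apply Subtype.ext
  show (!![1, x; 0, 1] * !![1, y; 0, 1] : Matrix _ _ R) = _
  rw [Matrix.mul_fin_two]
  simp [E12, add_comm]

theorem E21_mul (x y : R) : E21 x * E21 y = E21 (x + y) := by
  apply Subtype.ext
  show (!![1, 0; x, 1] * !![1, 0; y, 1] : Matrix _ _ R) = _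
  rw [Matrix.mul_fin_two]
  simp [E21, add_comm]

theorem E12_inv (x : R) : (E12 x)⁻¹ = E12 (-x) := by
  apply inv_eq_of_mul_eq_one_right
  rw [E12_mul, add_neg_cancel]
  apply Subtype.ext
  simp [E12, Matrix.one_fin_two]

theorem E21_inv (x : R) : (E21 x)⁻¹ = E21 (-x) := by
  apply inv_eq_of_mul_eq_one_right
  rw [E21_mul, add_neg_cancel]
  apply Subtype.ext
  simp [E21, Matrix.one_fin_two]

theorem Dm_mul_E12 (u : Rˣ) (x : R) :
    Dm u * E12 x = E12 ((u : R)^2 * x) * Dm u := by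
  apply Subtype.ext
  have h : ((u⁻¹ : Rˣ) : R) * (u : R) = 1 := u.inv_mul
  show (!![(u : R), 0; 0, ((u⁻¹ : Rˣ) : R)] * !![1, x; 0, 1] : Matrix _ _ R)
      = !![1, (u : R)^2 * x; 0, 1] * !![(u : R), 0; 0, ((u⁻¹ : Rˣ) : R)]
  rw [Matrix.mul_fin_two, Matrix.mul_fin_two]
  ext i j
  fin_cases i <;> fin_cases j <;> simp <;> linear_combination (-(u : R) * x) * h

theorem Dm_mul_E21 (u : Rˣ) (x : R) :
    Dm u * E21 x = E21 (((u⁻¹ : Rˣ) : R)^2 * x) * Dm u := by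
  apply Subtype.ext
  have h : ((u⁻¹ : Rˣ) : R) * (u : R) = 1 := u.inv_mul
  show (!![(u : R), 0; 0, ((u⁻¹ : Rˣ) : R)] * !![1, 0; x, 1] : Matrix _ _ R)
      = !![1, 0; ((u⁻¹ : Rˣ) : R)^2 * x, 1] * !![(u : R), 0; 0, ((u⁻¹ : Rˣ) : R)]
  rw [Matrix.mul_fin_two, Matrix.mul_fin_two]
  ext i j
  fin_cases i <;> fin_cases j <;> simp <;>
    linear_combination (-((u⁻¹ : Rˣ) : R) * x) * h

theorem commutator_E12 (u : Rˣ) (x : R) :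
    ⁅Dm u, E12 x⁆ = E12 (((u : R)^2 - 1) * x) := by
  rw [commutatorElement_def, Dm_mul_E12, E12_inv, mul_assoc, mul_assoc,
    ← mul_assoc (Dm u), mul_inv_cancel, one_mul, E12_mul]
  ring_nf

theorem commutator_E21 (u : Rˣ) (x : R) :
    ⁅Dm u, E21 x⁆ = E21 ((((u⁻¹ : Rˣ) : R)^2 - 1) * x) := by
  rw [commutatorElement_def, Dm_mul_E21, E21_inv, mul_assoc, mul_assoc,
    ← mul_assoc (Dm u), mul_inv_cancel, one_mul, E21_mul]
  ring_nf

/-- Upper elementary matrices of level `u² - 1` are commutators. -/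
theorem E12_mem (u : Rˣ) (β : R) :
    E12 (((u : R)^2 - 1) * β) ∈ commutator (SpecialLinearGroup (Fin 2) R) := by
  rw [← commutator_E12 u β, commutator]
  exact Subgroup.commutator_mem_commutator (Subgroup.mem_top _) (Subgroup.mem_top _)

/-- Lower elementary matrices of level `u² - 1` are commutators. -/
theorem E21_mem (u : Rˣ) (β : R) :
    E21 (((u : R)^2 - 1) * β) ∈ commutator (SpecialLinearGroup (Fin 2) R) := by
  have h : ((u⁻¹ : Rˣ) : R) * (u : R) = 1 := u.inv_mul
  have key : (((u⁻¹ : Rˣ) : R)^2 - 1) * (-((u : R)^2 * β)) = ((u : R)^2 - 1) * β := by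
    linear_combination (-β * (((u⁻¹ : Rˣ) : R) * (u : R) + 1)) * h
  rw [← key, ← commutator_E21 u, commutator]
  exact Subgroup.commutator_mem_commutator (Subgroup.mem_top _) (Subgroup.mem_top _)

/-- A diagonal matrix `diag (v, v⁻¹)` with `v ≡ 1 mod t²` factors as a product of four
elementary matrices of level `t`. -/
theorem diag_factor (t α : R) (v : Rˣ) (hv : (v : R) = 1 + t^2*α) :
    E12 (t*α) * E21 (t*1) * E12 (t*(-α * ((v⁻¹ : Rˣ) : R))) * E21 (t*(-(v : R))) = Dm v := by
  have h : ((v⁻¹ : Rˣ) : R) * (v : R) = 1 := v.inv_mul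
  apply Subtype.ext
  show (!![1, t*α; 0, 1] * !![1, 0; t*1, 1] * !![1, t*(-α * ((v⁻¹ : Rˣ) : R)); 0, 1]
      * !![1, 0; t*(-(v : R)), 1] : Matrix _ _ R) = !![(v : R), 0; 0, ((v⁻¹ : Rˣ) : R)]
  simp only [Matrix.mul_fin_two]
  ext i j
  fin_cases i <;> fin_cases j <;> simp
  · linear_combination (t^2*α*(v:R)) * h + (-(1 + t^2*α*(v:R)*((v⁻¹ : Rˣ) : R))) * hv
  · linear_combination (-(t*α)) * h + (t*α*((v⁻¹ : Rˣ) : R)) * hv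
  · linear_combination (t*((v:R)-1)) * h + (-(t*(v:R)*((v⁻¹ : Rˣ) : R))) * hv
  · linear_combination (-1 : R) * h + ((v⁻¹ : Rˣ) : R) * hv

/-- LU-type decomposition of a matrix in `SL₂` whose upper-left entry is a unit. -/
theorem assemble (g : SpecialLinearGroup (Fin 2) R) (v : Rˣ)
    (ha : (g : Matrix (Fin 2) (Fin 2) R) 0 0 = (v : R)) :
    g = E21 ((g : Matrix (Fin 2) (Fin 2) R) 1 0 * ((v⁻¹ : Rˣ) : R)) * Dm v
        * E12 (((v⁻¹ : Rˣ) : R) * (g : Matrix (Fin 2) (Fin 2) R) 0 1) := by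
  have h : ((v⁻¹ : Rˣ) : R) * (v : R) = 1 := v.inv_mul
  have hdet : (g : Matrix (Fin 2) (Fin 2) R).det = 1 := g.prop
  rw [Matrix.det_fin_two] at hdet
  rw [ha] at hdet
  apply Subtype.ext
  set b := (g : Matrix (Fin 2) (Fin 2) R) 0 1 with hb
  set c := (g : Matrix (Fin 2) (Fin 2) R) 1 0 with hc
  set d := (g : Matrix (Fin 2) (Fin 2) R) 1 1 with hd
  show (g : Matrix (Fin 2) (Fin 2) R)
      = (!![1, 0; c * ((v⁻¹ : Rˣ) : R), 1] * !![(v : R), 0; 0, ((v⁻¹ : Rˣ) : R)]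
        * !![1, ((v⁻¹ : Rˣ) : R) * b; 0, 1] : Matrix _ _ R)
  rw [Matrix.eta_fin_two (g : Matrix (Fin 2) (Fin 2) R), ha, ← hb, ← hc, ← hd]
  simp only [Matrix.mul_fin_two]
  ext i j
  fin_cases i <;> fin_cases j <;> simp
  linear_combination (-d) * h + ((v⁻¹ : Rˣ) : R) * hdet

/-- Any `SL₂` matrix congruent to `1` modulo `(u²-1)²` lies in the commutator subgroup. -/
theorem mem_commutator (u : Rˣ) (g : SpecialLinearGroup (Fin 2) R) (v : Rˣ) (α β γ : R)
    (ha : (g : Matrix (Fin 2) (Fin 2) R) 0 0 = (v : R))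
    (hv : (v : R) = 1 + ((u : R)^2 - 1)^2 * α)
    (hb : (g : Matrix (Fin 2) (Fin 2) R) 0 1 = ((u : R)^2 - 1)^2 * β)
    (hc : (g : Matrix (Fin 2) (Fin 2) R) 1 0 = ((u : R)^2 - 1)^2 * γ) :
    g ∈ commutator (SpecialLinearGroup (Fin 2) R) := by
  rw [assemble g v ha, ← diag_factor ((u : R)^2 - 1) α v hv]
  have h1 : (g : Matrix (Fin 2) (Fin 2) R) 1 0 * ((v⁻¹ : Rˣ) : R)
      = ((u : R)^2 - 1) * (((u : R)^2 - 1) * γ * ((v⁻¹ : Rˣ) : R)) := by rw [hc]; ring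
  have h2 : ((v⁻¹ : Rˣ) : R) * (g : Matrix (Fin 2) (Fin 2) R) 0 1
      = ((u : R)^2 - 1) * (((u : R)^2 - 1) * ((v⁻¹ : Rˣ) : R) * β) := by rw [hb]; ring
  rw [h1, h2]
  exact mul_mem (mul_mem (E21_mem u _) (mul_mem (mul_mem (mul_mem
    (E12_mem u _) (E21_mem u _)) (E12_mem u _)) (E21_mem u _))) (E12_mem u _)

end Stmt11Aux

/-- Let `p` be any prime and `O` the ring of integers of a finite
extension of `ℚ_p` — modelled abstractly as a compact Hausdorff topological ring which is a
discrete valuation ring of characteristic zero, whose topology is the adic topology of its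
maximal ideal, and whose residue field is finite of characteristic `p`. Then the closure of
the commutator subgroup of `SL₂(O)` is open in `SL₂(O)` (equivalently, being closed, it has
finite index). -/
theorem stmt11 (p : ℕ) (hp : p.Prime)
    (O : Type) [CommRing O] [IsDomain O] [TopologicalSpace O] [IsTopologicalRing O]
    [IsLocalRing O] [IsDiscreteValuationRing O] [CharZero O]
    [CompactSpace O] [T2Space O]
    (hadic : IsAdic (maximalIdeal O))
    [Finite (ResidueField O)] (hchar : CharP (ResidueField O) p) :
    IsOpen (closure ((commutator (SpecialLinearGroup (Fin 2) O) : Subgroup _) :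
      Set (SpecialLinearGroup (Fin 2) O))) := by
  classical
  obtain ⟨π, hπ⟩ := IsDiscreteValuationRing.exists_irreducible O
  have hπm : π ∈ maximalIdeal O := (mem_maximalIdeal π).2 hπ.not_isUnit
  -- a helper producing units `1 + e` for `e` in the maximal ideal
  have unit_one_add : ∀ e : O, e ∈ maximalIdeal O → ∃ w : Oˣ, (w : O) = 1 + e := by
    intro e he
    have h1 : IsUnit (1 - (-e)) :=
      isUnit_one_sub_self_of_mem_nonunits _ ((mem_maximalIdeal _).1 (neg_mem he))
    rw [sub_neg_eq_add] at h1
    exact ⟨h1.unit, h1.unit_spec⟩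
  -- find a unit u with t := u² - 1 nonzero and in the maximal ideal
  obtain ⟨u, ht0, htm⟩ : ∃ u : Oˣ, ((u : O)^2 - 1 ≠ 0) ∧ ((u : O)^2 - 1 ∈ maximalIdeal O) := by
    by_cases h2 : (2 : O) + π = 0
    · -- then π = -2, so use e = π²; note 2 + π² = 6 ≠ 0 in characteristic zero
      have hππ : π^2 ∈ maximalIdeal O := by
        rw [pow_two]; exact Ideal.mul_mem_right _ _ hπm
      obtain ⟨w, hw⟩ := unit_one_add (π^2) hππ
      have hiden : (w : O)^2 - 1 = π^2 * ((2 : O) + π^2) := by rw [hw]; ring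
      have hπeq : π = -2 := by linear_combination h2
      refine ⟨w, ?_, ?_⟩
      · rw [hiden, hπeq]
        have h24 : ((-2 : O))^2 * ((2 : O) + (-2 : O)^2) = 24 := by norm_num
        rw [h24]
        exact_mod_cast (Nat.cast_ne_zero (R := O)).2 (by norm_num : (24 : ℕ) ≠ 0)
      · rw [hiden]
        exact Ideal.mul_mem_right _ _ hππ
    · obtain ⟨w, hw⟩ := unit_one_add π hπm
      have hiden : (w : O)^2 - 1 = π * ((2 : O) + π) := by rw [hw]; ring
      refine ⟨w, ?_, ?_⟩
      · rw [hiden]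
        exact mul_ne_zero hπ.ne_zero h2
      · rw [hiden]
        exact Ideal.mul_mem_right _ _ hπm
  set t : O := (u : O)^2 - 1 with hT
  set s : O := t^2 with hS
  have hs0 : s ≠ 0 := pow_ne_zero 2 ht0
  have hsm : s ∈ maximalIdeal O := by rw [hS, pow_two]; exact Ideal.mul_mem_right _ _ htm
  set I : Ideal O := Ideal.span {s} with hI
  -- the ideal
  have hIopen : IsOpen (I : Set O) := by
    obtain ⟨n, w, hw⟩ := IsDiscreteValuationRing.eq_unit_mul_pow_irreducible hs0 hπ
    have hm : maximalIdeal O = Ideal.span {π} :=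
      (IsDiscreteValuationRing.irreducible_iff_uniformizer π).1 hπ
    have hIe : I = maximalIdeal O ^ n := by
      rw [hm, Ideal.span_singleton_pow, hI]
      apply Ideal.span_singleton_eq_span_singleton.2
      exact ⟨w⁻¹, by rw [hw, mul_comm (w : O) (π^n), mul_assoc, Units.mul_inv, mul_one]⟩
    rw [hIe]
    exact (isAdic_iff.1 hadic).1 n
  -- the open neighbourhood of 1 in SL₂(O)
  set S : Set (Matrix (Fin 2) (Fin 2) O) :=
    ⋂ i, ⋂ j, (fun M : Matrix (Fin 2) (Fin 2) O =>
      M i j - (1 : Matrix (Fin 2) (Fin 2) O) i j) ⁻¹' (I : Set O) with hSdef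
  have hSopen : IsOpen S := by
    apply isOpen_iInter_of_finite
    intro i
    apply isOpen_iInter_of_finite
    intro j
    exact hIopen.preimage ((continuous_id.matrix_elem i j).sub continuous_const)
  set U : Set (SpecialLinearGroup (Fin 2) O) :=
    (fun A : SpecialLinearGroup (Fin 2) O => (A : Matrix (Fin 2) (Fin 2) O)) ⁻¹' S with hUdef
  have hUopen : IsOpen U := hSopen.preimage continuous_induced_dom
  have hU1 : (1 : SpecialLinearGroup (Fin 2) O) ∈ U := by
    simp only [hUdef, hSdef, Set.mem_preimage, Set.mem_iInter]
    intro i j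
    simp [sub_self]
  -- U is contained in the commutator subgroup
  have hUsub : U ⊆ (commutator (SpecialLinearGroup (Fin 2) O) :
      Set (SpecialLinearGroup (Fin 2) O)) := by
    intro g hg
    simp only [hUdef, hSdef, Set.mem_preimage, Set.mem_iInter] at hg
    have hga := hg 0 0
    have hgb := hg 0 1
    have hgc := hg 1 0
    rw [Matrix.one_apply_eq, hI, SetLike.mem_coe, Ideal.mem_span_singleton] at hga
    rw [Matrix.one_apply_ne (by decide), sub_zero, hI, SetLike.mem_coe,
      Ideal.mem_span_singleton] at hgb
    rw [Matrix.one_apply_ne (by decide), sub_zero, hI, SetLike.mem_coe,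
      Ideal.mem_span_singleton] at hgc
    obtain ⟨α, hα⟩ := hga
    obtain ⟨β, hβ⟩ := hgb
    obtain ⟨γ, hγ⟩ := hgc
    have haeq : (g : Matrix (Fin 2) (Fin 2) O) 0 0 = 1 + s * α := by
      linear_combination hα
    have hunit : IsUnit ((g : Matrix (Fin 2) (Fin 2) O) 0 0) := by
      rw [haeq]
      have h1 : IsUnit (1 - (-(s * α))) :=
        isUnit_one_sub_self_of_mem_nonunits _ ((mem_maximalIdeal _).1
          (neg_mem (Ideal.mul_mem_right _ _ hsm)))
      rwa [sub_neg_eq_add] at h1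
    refine Stmt11Aux.mem_commutator u g hunit.unit α β γ ?_ ?_ ?_ ?_
    · exact hunit.unit_spec.symm
    · rw [hunit.unit_spec]; rw [haeq, hS, hT]
    · rw [hβ, hS, hT]
    · rw [hγ, hS, hT]
  -- conclude: the closure of a subgroup containing an open neighbourhood of 1 is open
  rw [← Subgroup.topologicalClosure_coe]
  apply Subgroup.isOpen_of_mem_nhds
  apply Filter.mem_of_superset (hUopen.mem_nhds hU1)
  exact hUsub.trans (Subgroup.le_topologicalClosure _)
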